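/- For the elliptic case, Ω'(x) = -(m²sin x cos x/2)·(3m²(2-m²)cos²x + 3m⁴ + m² - 4)/(1-m²sin²x)³; if 0 < m ≤ 2/√7, then Ω is monotonically increasing on (0, π/2). -/

import Mathlib

/-- For the elliptic case,
`Ω'(x) = -(m²sin x cos x/2)(3m²(2-m²)cos²x + 3m⁴ + m² - 4)/(1-m²sin²x)³` on `(0, π/2)`;
and if `0 < m ≤ 2/√7`, then `Ω` is monotonically increasing on `(0, π/2)`. -/
theorem stmt17 (m : ℝ) (hm0 : 0 < m) (hm1 : m < 1)
    (Ω : ℝ → ℝ)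
    (hΩ : ∀ x, Ω x = (m ^ 2 / 4) *
      (m ^ 2 * Real.cos x ^ 4 + (m ^ 2 - 4) * Real.cos x ^ 2 + 2 * (1 - m ^ 2)) /
      (1 - m ^ 2 * Real.sin x ^ 2) ^ 2) :
    (∀ x ∈ Set.Ioo 0 (Real.pi / 2),
      deriv Ω x = -(m ^ 2 * Real.sin x * Real.cos x / 2) *
        (3 * m ^ 2 * (2 - m ^ 2) * Real.cos x ^ 2 + 3 * m ^ 4 + m ^ 2 - 4) /
        (1 - m ^ 2 * Real.sin x ^ 2) ^ 3) ∧
    (m ≤ 2 / Real.sqrt 7 → StrictMonoOn Ω (Set.Ioo 0 (Real.pi / 2))) := by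
  have hE : ∀ x : ℝ, (0:ℝ) < 1 - m ^ 2 + m ^ 2 * Real.cos x ^ 2 := by
    intro x
    nlinarith [sq_nonneg (Real.cos x), mul_nonneg (sq_nonneg m) (sq_nonneg (Real.cos x))]
  have hrw : ∀ x : ℝ, 1 - m ^ 2 * Real.sin x ^ 2 = 1 - m ^ 2 + m ^ 2 * Real.cos x ^ 2 := by
    intro x; rw [Real.sin_sq]; ring
  have hΩeq : Ω = fun y => (m ^ 2 / 4) *
      (m ^ 2 * Real.cos y ^ 4 + (m ^ 2 - 4) * Real.cos y ^ 2 + 2 * (1 - m ^ 2)) /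
      (1 - m ^ 2 + m ^ 2 * Real.cos y ^ 2) ^ 2 := by
    funext y; rw [hΩ, hrw]
  have hderiv : ∀ x : ℝ, HasDerivAt Ω
      (-(m ^ 2 * Real.sin x * Real.cos x / 2) *
        (3 * m ^ 2 * (2 - m ^ 2) * Real.cos x ^ 2 + 3 * m ^ 4 + m ^ 2 - 4) /
        (1 - m ^ 2 + m ^ 2 * Real.cos x ^ 2) ^ 3) x := by
    intro x
    rw [hΩeq]
    have hc := Real.hasDerivAt_cos x
    have h4 : HasDerivAt (fun y => Real.cos y ^ 4) (4 * Real.cos x ^ 3 * (-Real.sin x)) x := by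
      have := hc.fun_pow 4; norm_num at this; exact this.congr_deriv (by ring)
    have h2 : HasDerivAt (fun y => Real.cos y ^ 2) (2 * Real.cos x * (-Real.sin x)) x := by
      have := hc.fun_pow 2; norm_num at this; exact this.congr_deriv (by ring)
    have hnum : HasDerivAt (fun y => (m ^ 2 / 4) *
        (m ^ 2 * Real.cos y ^ 4 + (m ^ 2 - 4) * Real.cos y ^ 2 + 2 * (1 - m ^ 2)))
        ((m ^ 2 / 4) * (m ^ 2 * (4 * Real.cos x ^ 3 * (-Real.sin x)) +
          (m ^ 2 - 4) * (2 * Real.cos x * (-Real.sin x)))) x := by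
      have := ((((h4.const_mul (m ^ 2)).add (h2.const_mul (m ^ 2 - 4))).add_const
        (2 * (1 - m ^ 2))).const_mul (m ^ 2 / 4))
      exact this
    have hden : HasDerivAt (fun y => (1 - m ^ 2 + m ^ 2 * Real.cos y ^ 2) ^ 2)
        (2 * (1 - m ^ 2 + m ^ 2 * Real.cos x ^ 2) * (m ^ 2 * (2 * Real.cos x * (-Real.sin x)))) x := by
      have hin : HasDerivAt (fun y => 1 - m ^ 2 + m ^ 2 * Real.cos y ^ 2)
          (m ^ 2 * (2 * Real.cos x * (-Real.sin x))) x :=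
        (h2.const_mul (m ^ 2)).const_add (1 - m ^ 2)
      have := hin.fun_pow 2; norm_num at this; exact this.congr_deriv (by ring)
    have hden0 : (1 - m ^ 2 + m ^ 2 * Real.cos x ^ 2) ^ 2 ≠ 0 :=
      pow_ne_zero 2 (ne_of_gt (hE x))
    have := hnum.div hden hden0
    refine this.congr_deriv ?_
    have hE0 : (1 - m ^ 2 + m ^ 2 * Real.cos x ^ 2) ≠ 0 := ne_of_gt (hE x)
    rw [eq_comm, div_eq_div_iff (pow_ne_zero 3 hE0) (pow_ne_zero 2 hden0)]
    ring
  constructor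
  · intro x _
    rw [(hderiv x).deriv, hrw]
  · intro hm7
    have hm2 : m ^ 2 ≤ 4 / 7 := by
      have h7 : (0:ℝ) < Real.sqrt 7 := Real.sqrt_pos.mpr (by norm_num)
      have hs7 : Real.sqrt 7 ^ 2 = 7 := Real.sq_sqrt (by norm_num)
      have hmul : m * Real.sqrt 7 ≤ 2 := by
        calc m * Real.sqrt 7 ≤ (2 / Real.sqrt 7) * Real.sqrt 7 := by
              exact mul_le_mul_of_nonneg_right hm7 h7.le
          _ = 2 := by field_simp
      nlinarith [hm0.le, h7.le]
    have hdiff : Differentiable ℝ Ω := fun x => (hderiv x).differentiableAt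
    apply strictMonoOn_of_deriv_pos (convex_Ioo _ _) hdiff.continuous.continuousOn
    intro x hx
    rw [interior_Ioo] at hx
    obtain ⟨hx0, hx2⟩ := hx
    rw [(hderiv x).deriv]
    have hpi := Real.pi_pos
    have hs : 0 < Real.sin x := Real.sin_pos_of_pos_of_lt_pi hx0 (by linarith)
    have hcpos : 0 < Real.cos x := Real.cos_pos_of_mem_Ioo ⟨by linarith, hx2⟩
    have hc2 : Real.cos x ^ 2 < 1 := by
      nlinarith [Real.sin_sq_add_cos_sq x]
    have hB : 3 * m ^ 2 * (2 - m ^ 2) * Real.cos x ^ 2 + 3 * m ^ 4 + m ^ 2 - 4 < 0 := by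
      have hq : 0 < (3 * m ^ 2 * (2 - m ^ 2)) * (1 - Real.cos x ^ 2) := by
        apply mul_pos
        · nlinarith [mul_pos hm0 hm0]
        · linarith
      nlinarith [hq, hm2]
    apply div_pos
    · have h1 : 0 < m ^ 2 * Real.sin x * Real.cos x / 2 := by positivity
      nlinarith [mul_pos h1 (neg_pos.mpr hB)]
    · exact pow_pos (hE x) 3
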